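/- Let X be a continuum and p ∈ X such that HS(p,X) is locally connected at the point C_p^X. Then for any two distinct points [A], [B] ∈ HS(p,X) \ {C_p^X}, the continuum HS(p,X) is aposyndetic at [A] with respect to [B]: there is a subcontinuum M of HS(p,X) with [A] ∈ int(M) and [B] ∉ M. -/

import Mathlib

open TopologicalSpace Set

open Metric Set TopologicalSpace

section Auxiliary
open Metric Set

variable {α : Type*} [MetricSpace α]

/-- An ε-chain in `S` from `s` to `t`. -/
def ChainIn (S : Set α) (ε : ℝ) (s t : α) : Prop :=
  ∃ n : ℕ, ∃ f : ℕ → α, f 0 = s ∧ f n = t ∧ (∀ i ≤ n, f i ∈ S) ∧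
    ∀ i < n, dist (f i) (f (i + 1)) ≤ ε

theorem ChainIn.refl {S : Set α} {ε : ℝ} {s : α} (hs : s ∈ S) : ChainIn S ε s s :=
  ⟨0, fun _ => s, rfl, rfl, fun _ _ => hs, fun i h => absurd h (Nat.not_lt_zero i)⟩

theorem ChainIn.symm {S : Set α} {ε : ℝ} {s t : α} (h : ChainIn S ε s t) : ChainIn S ε t s := by
  obtain ⟨n, f, h0, hn, hmem, hd⟩ := h
  refine ⟨n, fun i => f (n - i), by simp [hn], by simp [h0], fun i hi => hmem _ (Nat.sub_le n i),
    fun i hi => ?_⟩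
  have h1 : n - i = (n - (i+1)) + 1 := by omega
  show dist (f (n - i)) (f (n - (i+1))) ≤ ε
  rw [h1, dist_comm]
  exact hd _ (by omega)

theorem ChainIn.trans {S : Set α} {ε : ℝ} {s t u : α} (h1 : ChainIn S ε s t)
    (h2 : ChainIn S ε t u) : ChainIn S ε s u := by
  obtain ⟨n, f, hf0, hfn, hfmem, hfd⟩ := h1
  obtain ⟨m, g, hg0, hgm, hgmem, hgd⟩ := h2
  refine ⟨n + m, fun i => if i ≤ n then f i else g (i - n), by simp [hf0], ?_, ?_, ?_⟩
  · by_cases h : m = 0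
    · simp [h, Nat.le_refl, hfn, ← hg0, h ▸ hgm]
    · simp only [if_neg (by omega : ¬ n + m ≤ n)]
      simpa using hgm
  · intro i hi
    by_cases h : i ≤ n
    · simpa [h] using hfmem i h
    · simpa [h] using hgmem (i - n) (by omega)
  · intro i hi
    rcases lt_trichotomy i n with h | rfl | h
    · simpa [h.le, Nat.succ_le_of_lt h] using hfd i h
    · by_cases h : m = 0
      · omega
      · simpa [Nat.not_succ_le_self, hfn, ← hg0] using hgd 0 (by omega)
    · have h1 : ¬ i ≤ n := by omega
      have h2 : ¬ i + 1 ≤ n := by omega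
      have h3 : i + 1 - n = (i - n) + 1 := by omega
      simpa [h1, h2, h3] using hgd (i - n) (by omega)

theorem ChainIn.mono {S T : Set α} {ε : ℝ} {s t : α} (hST : S ⊆ T) (h : ChainIn S ε s t) :
    ChainIn T ε s t := by
  obtain ⟨n, f, h0, hn, hmem, hd⟩ := h
  exact ⟨n, f, h0, hn, fun i hi => hST (hmem i hi), hd⟩

/-- Two disjoint nonempty compact sets are at positive distance. -/
theorem exists_pos_forall_le_dist {E F : Set α} (hE : IsCompact E) (hF : IsCompact F)
    (hEne : E.Nonempty) (hFne : F.Nonempty) (hdisj : E ∩ F = ∅) :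
    ∃ δ > 0, ∀ x ∈ E, ∀ y ∈ F, δ ≤ dist x y := by
  obtain ⟨x₀, hx₀, hmin⟩ := hE.exists_isMinOn hEne
    ((continuous_infDist_pt F).continuousOn (s := E))
  have hx₀F : x₀ ∉ F := fun h => (eq_empty_iff_forall_notMem.1 hdisj x₀) ⟨hx₀, h⟩
  have hpos : 0 < infDist x₀ F := (hF.isClosed.notMem_iff_infDist_pos hFne).1 hx₀F
  exact ⟨infDist x₀ F, hpos, fun x hx y hy =>
    le_trans (hmin hx) (infDist_le_dist_of_mem hy)⟩

/-- A chain with small steps cannot jump between two far-apart pieces. -/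
theorem ChainIn.stay {S E F : Set α} {δ : ℝ} (hSEF : S ⊆ E ∪ F)
    (hsep : ∀ x ∈ E, ∀ y ∈ F, δ ≤ dist x y) {ε : ℝ} (hε : ε < δ) {s t : α}
    (h : ChainIn S ε s t) (hs : s ∈ E) : t ∈ E := by
  obtain ⟨n, f, h0, hn, hmem, hd⟩ := h
  have key : ∀ i ≤ n, f i ∈ E := by
    intro i
    induction i with
    | zero => intro _; rwa [h0]
    | succ k ih =>
      intro hk
      have hfk : f k ∈ E := ih (by omega)
      rcases hSEF (hmem (k+1) hk) with h' | h'
      · exact h'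
      · exact absurd (hsep _ hfk _ h') (by have := hd k (by omega); intro hc; linarith)
  exact hn ▸ key n le_rfl

/-- A compact set in which every point is ε-chainable to a fixed point, for every ε,
is connected. -/
theorem isConnected_of_chainIn {S : Set α} (hS : IsCompact S) {s₀ : α} (h₀ : s₀ ∈ S)
    (H : ∀ s ∈ S, ∀ ε > 0, ChainIn S ε s s₀) : IsConnected S := by
  refine ⟨⟨s₀, h₀⟩, ?_⟩
  rw [isPreconnected_iff_subset_of_fully_disjoint_closed hS.isClosed]
  intro E F hEc hFc hSEF hEF
  by_contra hcon
  push_neg at hcon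
  obtain ⟨hnE, hnF⟩ := hcon
  obtain ⟨a, haS, haE⟩ := not_subset.1 hnE
  obtain ⟨b, hbS, hbF⟩ := not_subset.1 hnF
  have haF : a ∈ F := (hSEF haS).resolve_left haE
  have hbE : b ∈ E := (hSEF hbS).resolve_right hbF
  -- restrict to S
  have hE' : IsCompact (S ∩ E) := hS.inter_right hEc
  have hF' : IsCompact (S ∩ F) := hS.inter_right hFc
  obtain ⟨δ, hδ, hsep⟩ := exists_pos_forall_le_dist hE' hF' ⟨b, hbS, hbE⟩ ⟨a, haS, haF⟩
    (by rw [disjoint_iff_inter_eq_empty] at hEF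
        rw [eq_empty_iff_forall_notMem] at hEF ⊢
        exact fun x hx => hEF x ⟨hx.1.2, hx.2.2⟩)
  have hSEF' : S ⊆ (S ∩ E) ∪ (S ∩ F) := fun x hx => by
    rcases hSEF hx with h | h
    · exact Or.inl ⟨hx, h⟩
    · exact Or.inr ⟨hx, h⟩
  have hSFE' : S ⊆ (S ∩ F) ∪ (S ∩ E) := fun x hx => (hSEF' hx).symm
  have h1 := (H a haS (δ/2) (by linarith)).stay hSFE'
    (fun x hx y hy => by rw [dist_comm]; exact hsep y hy x hx) (by linarith) ⟨haS, haF⟩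
  have h2 := (H b hbS (δ/2) (by linarith)).stay hSEF' hsep (by linarith) ⟨hbS, hbE⟩
  rw [disjoint_iff_inter_eq_empty, eq_empty_iff_forall_notMem] at hEF
  exact hEF s₀ ⟨h2.2, h1.2⟩

open Metric Set

/-- In a compact T2 space, a clopen set can be interpolated between a connected component
and an open set containing it. -/
theorem exists_isClopen_of_connectedComponent_subset {β : Type*} [TopologicalSpace β] [T2Space β]
    [CompactSpace β] {x : β} {U : Set β} (hU : IsOpen U) (h : connectedComponent x ⊆ U) :
    ∃ Z : Set β, IsClopen Z ∧ x ∈ Z ∧ Z ⊆ U := by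
  have heq := connectedComponent_eq_iInter_isClopen x
  have hempty : (Uᶜ ∩ ⋂ i : { s : Set β // IsClopen s ∧ x ∈ s }, (i : Set β)) = ∅ := by
    rw [← heq, eq_empty_iff_forall_notMem]
    exact fun z hz => hz.1 (h hz.2)
  obtain ⟨t, ht⟩ := (hU.isClosed_compl.isCompact).elim_finite_subfamily_closed
    (fun i : { s : Set β // IsClopen s ∧ x ∈ s } => (i : Set β)) (fun i => i.2.1.1) hempty
  refine ⟨⋂ i ∈ t, (i : Set β), isClopen_biInter_finset (fun i _ => i.2.1), ?_, ?_⟩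
  · exact mem_iInter₂.2 fun i _ => i.2.2
  · intro z hz
    by_contra hzU
    exact (eq_empty_iff_forall_notMem.1 ht z) ⟨hzU, by simpa using hz⟩

variable {X : Type*} [MetricSpace X]

/-- Growth step: the connected component of `M` in its closed `ε`-neighbourhood relative to a
continuum `Y` either is all of `Y` or reaches distance `ε` from `M`. -/
theorem growth_step {Y M : Set X} (hY : IsCompact Y) (hYc : IsPreconnected Y)
    (hM : IsCompact M) (hMc : IsPreconnected M) (hMne : M.Nonempty) (hMY : M ⊆ Y)
    {ε : ℝ} (hε : 0 < ε) :
    ∃ C : Set X, IsCompact C ∧ IsPreconnected C ∧ M ⊆ C ∧ C ⊆ Y ∧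
      (∀ y ∈ C, infDist y M ≤ ε) ∧ (C = Y ∨ ∃ y ∈ C, ε ≤ infDist y M) := by
  obtain ⟨m₀, hm₀⟩ := hMne
  set N : Set X := Y ∩ {y | infDist y M ≤ ε} with hNdef
  have hNclosed : IsClosed {y : X | infDist y M ≤ ε} :=
    isClosed_le (continuous_infDist_pt M) continuous_const
  have hN : IsCompact N := hY.inter_right hNclosed
  have hm₀N : m₀ ∈ N := ⟨hMY hm₀, by simp [infDist_zero_of_mem hm₀, hε.le]⟩
  have hMN : M ⊆ N := fun y hy => ⟨hMY hy, by simp [infDist_zero_of_mem hy, hε.le]⟩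
  set C : Set X := connectedComponentIn N m₀ with hCdef
  have hMC : M ⊆ C := hMc.subset_connectedComponentIn hm₀ hMN
  have hCN : C ⊆ N := connectedComponentIn_subset N m₀
  haveI : CompactSpace ↥N := isCompact_iff_compactSpace.mp hN
  have hCeq : C = (↑) '' connectedComponent (⟨m₀, hm₀N⟩ : N) :=
    connectedComponentIn_eq_image hm₀N
  have hCcomp : IsCompact C := by
    rw [hCeq]
    exact (isClosed_connectedComponent.isCompact).image continuous_subtype_val
  refine ⟨C, hCcomp, isPreconnected_connectedComponentIn, hMC, fun y hy => (hCN hy).1,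
    fun y hy => (hCN hy).2, ?_⟩
  by_cases hex : ∃ y ∈ C, ε ≤ infDist y M
  · exact Or.inr hex
  push_neg at hex
  left
  -- all points of C are at distance < ε from M; find a clopen set of N around the component
  have hU'open : IsOpen {z : ↥N | infDist (z : X) M < ε} :=
    isOpen_lt ((continuous_infDist_pt M).comp continuous_subtype_val) continuous_const
  have hccU' : connectedComponent (⟨m₀, hm₀N⟩ : N) ⊆ {z : ↥N | infDist (z : X) M < ε} := by
    intro z hz
    exact hex _ (hCeq ▸ mem_image_of_mem _ hz)
  obtain ⟨Z', hZ'clopen, hxZ', hZ'U⟩ :=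
    exists_isClopen_of_connectedComponent_subset hU'open hccU'
  obtain ⟨O₀, hO₀, hZ'eq⟩ := isOpen_induced_iff.mp hZ'clopen.2
  set Z : Set X := (↑) '' Z' with hZdef
  have hZN : Z ⊆ N := by rintro z ⟨z', _, rfl⟩; exact z'.2
  have hZeq : Z = N ∩ O₀ := by
    rw [hZdef, ← hZ'eq, Subtype.image_preimage_coe]
  have hZclosed : IsClosed Z := by
    have : IsCompact Z := (hZ'clopen.1.isCompact).image continuous_subtype_val
    exact this.isClosed
  have hZdistlt : ∀ z ∈ Z, infDist z M < ε := by
    rintro z ⟨z', hz', rfl⟩; exact hZ'U hz'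
  -- Z is relatively open in Y
  have hZrelopen : ∀ z ∈ Z, ∃ O : Set X, IsOpen O ∧ z ∈ O ∧ O ∩ Y ⊆ Z := by
    intro z hz
    refine ⟨O₀ ∩ {y | infDist y M < ε}, hO₀.inter (isOpen_lt (continuous_infDist_pt M)
      continuous_const), ⟨(hZeq ▸ hz).2, hZdistlt z hz⟩, ?_⟩
    rintro y ⟨⟨hyO, hylt⟩, hyY⟩
    rw [hZeq]
    exact ⟨⟨hyY, show infDist y M ≤ ε from hylt.le⟩, hyO⟩
  -- pass to the subtype of Y
  have hYne : Y.Nonempty := ⟨m₀, hMY hm₀⟩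
  haveI : PreconnectedSpace ↥Y := Subtype.preconnectedSpace hYc
  haveI : Nonempty ↥Y := ⟨⟨m₀, hMY hm₀⟩⟩
  set W : Set ↥Y := (↑) ⁻¹' Z with hWdef
  have hWclosed : IsClosed W := hZclosed.preimage continuous_subtype_val
  have hWopen : IsOpen W := by
    rw [isOpen_iff_forall_mem_open]
    intro w hw
    obtain ⟨O, hO, hwO, hOY⟩ := hZrelopen _ hw
    exact ⟨(Subtype.val ⁻¹' O : Set ↥Y), fun y hy => hOY ⟨hy, y.2⟩,
      hO.preimage continuous_subtype_val, show (w : X) ∈ O from hwO⟩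
  have hWne : W.Nonempty := ⟨⟨m₀, hMY hm₀⟩, ⟨⟨m₀, hm₀N⟩, hxZ', rfl⟩⟩
  have hWuniv : W = univ := IsClopen.eq_univ ⟨hWclosed, hWopen⟩ hWne
  have hYZ : Y ⊆ Z := by
    intro y hy
    have : (⟨y, hy⟩ : ↥Y) ∈ W := hWuniv ▸ mem_univ _
    exact this
  have hNY : N = Y := subset_antisymm (fun y hy => hy.1) (fun y hy => hZN (hYZ hy))
  rw [hCdef, hNY]
  exact subset_antisymm (connectedComponentIn_subset Y m₀)
    (hYc.subset_connectedComponentIn (hMY hm₀) subset_rfl)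


theorem ChainIn.single {α : Type*} [MetricSpace α] {S : Set α} {ε : ℝ} {s t : α}
    (hs : s ∈ S) (ht : t ∈ S) (hd : dist s t ≤ ε) : ChainIn S ε s t := by
  refine ⟨1, fun i => if i = 0 then s else t, by simp, by simp, ?_, ?_⟩
  · intro i _
    by_cases h : i = 0 <;> simp [h, hs, ht]
  · intro i hi
    have : i = 0 := by omega
    simpa [this] using hd

/-- In a preconnected metric space any two points are joined by ε-chains. -/
theorem chainIn_univ {α : Type*} [MetricSpace α] [PreconnectedSpace α] (x y : α)
    {ε : ℝ} (hε : 0 < ε) : ChainIn (univ : Set α) ε x y := by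
  set W : Set α := {z | ChainIn (univ : Set α) ε x z} with hW
  have hWx : x ∈ W := ChainIn.refl (mem_univ x)
  have hopen : IsOpen W := by
    rw [isOpen_iff_forall_mem_open]
    intro z hz
    refine ⟨ball z ε, fun w hw => hz.trans (ChainIn.single (mem_univ z) (mem_univ w)
      (by rw [dist_comm]; exact (mem_ball.1 hw).le)), isOpen_ball, mem_ball_self hε⟩
  have hclosed : IsClosed W := by
    rw [← closure_subset_iff_isClosed]
    intro z hz
    obtain ⟨w, hwW, hwz⟩ := Metric.mem_closure_iff.1 hz ε hε
    exact hwW.trans (ChainIn.single (mem_univ w) (mem_univ z) (by rw [dist_comm]; exact hwz.le))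
  have huniv : W = univ := IsClopen.eq_univ ⟨hclosed, hopen⟩ ⟨x, hWx⟩
  have : y ∈ W := huniv ▸ mem_univ y
  exact this

variable {X : Type*} [MetricSpace X]

/-- Bound on the size of ε-separated finite subsets of a compact set. -/
theorem exists_card_bound {Y : Set X} (hY : IsCompact Y) {ε : ℝ} (hε : 0 < ε) :
    ∃ Φ : ℕ, ∀ T : Finset X, ↑T ⊆ Y → (∀ x ∈ T, ∀ y ∈ T, x ≠ y → ε ≤ dist x y) →
      T.card ≤ Φ := by
  obtain ⟨s, _, hsfin, hscover⟩ := finite_cover_balls_of_compact hY (half_pos hε)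
  refine ⟨hsfin.toFinset.card, fun T hTY hTsep => ?_⟩
  have hc : ∀ x ∈ T, ∃ c, c ∈ s ∧ x ∈ ball c (ε/2) := by
    intro x hx
    have := hscover (hTY hx)
    simpa using this
  choose! c hcs hcb using hc
  refine Finset.card_le_card_of_injOn c (fun a ha => hsfin.mem_toFinset.2 (hcs a ha)) ?_
  intro a ha b hb hab
  by_contra hne
  have h1 : dist a b < ε := by
    have h2 := mem_ball.1 (hcb a ha)
    have h3 := mem_ball.1 (hcb b hb)
    calc dist a b ≤ dist a (c a) + dist (c a) b := dist_triangle _ _ _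
      _ = dist a (c a) + dist b (c b) := by rw [hab, dist_comm (c b) b]
      _ < ε/2 + ε/2 := add_lt_add h2 h3
      _ = ε := by ring
  exact absurd (hTsep a ha b hb hne) (not_le.2 h1)

end Auxiliary

/-- The hyperspace of subcontinua of `X`. -/
abbrev Hyp (X : Type*) [MetricSpace X] : Type _ :=
  {A : NonemptyCompacts X // IsConnected (A : Set X)}

variable {X : Type*} [MetricSpace X]

/-- `C(p,X)`, the subcontinua containing `p`, as a subset of `Hyp X`. -/
def CpSet (p : X) : Set (Hyp X) := {A | p ∈ (A.1 : Set X)}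

/-- The setoid collapsing `C(p,X)` to a point. -/
def hsSetoid (p : X) : Setoid (Hyp X) where
  r A B := A = B ∨ (A ∈ CpSet p ∧ B ∈ CpSet p)
  iseqv := by
    constructor
    · intro A; exact Or.inl rfl
    · rintro A B (rfl | h); exacts [Or.inl rfl, Or.inr ⟨h.2, h.1⟩]
    · rintro A B C (rfl | h) (rfl | h')
      exacts [Or.inl rfl, Or.inr h', Or.inr h, Or.inr ⟨h.1, h'.2⟩]

/-- The hyperspace `HS(p,X) = C(X)/C(p,X)`. -/
abbrev HS (p : X) : Type _ := Quotient (hsSetoid p)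

/-- The quotient map `π_p^X`. -/
def hsMk (p : X) : Hyp X → HS p := Quotient.mk (hsSetoid p)

/-- The singleton `{p}` as a subcontinuum. -/
def singHyp (p : X) : Hyp X :=
  ⟨⟨⟨{p}, isCompact_singleton⟩, Set.singleton_nonempty p⟩, isConnected_singleton⟩

/-- The distinguished point `C_p^X` of `HS(p,X)`. -/
def CpPoint (p : X) : HS p := hsMk p (singHyp p)


-- ### Basic facts about `Hyp X`

theorem hypDist_eq (A B : Hyp X) : dist A B = hausdorffDist (A.1 : Set X) (B.1 : Set X) := by
  rw [Subtype.dist_eq, NonemptyCompacts.dist_eq]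

theorem hypEdist_ne_top (A B : Hyp X) :
    EMetric.hausdorffEdist (A.1 : Set X) (B.1 : Set X) ≠ ⊤ :=
  hausdorffEdist_ne_top_of_nonempty_of_bounded A.1.nonempty B.1.nonempty
    A.1.isCompact.isBounded B.1.isCompact.isBounded

/-- A continuum from the data. -/
def mkHyp (C : Set X) (h1 : IsCompact C) (h2 : C.Nonempty) (h3 : IsPreconnected C) : Hyp X :=
  ⟨⟨⟨C, h1⟩, h2⟩, ⟨h2, h3⟩⟩

@[simp] theorem mkHyp_coe (C : Set X) (h1 h2 h3) : ((mkHyp C h1 h2 h3).1 : Set X) = C := rfl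

@[simp] theorem singHyp_coe (p : X) : ((singHyp p).1 : Set X) = {p} := rfl

/-- Growth chains in the hyperspace: any subcontinuum `K` of a continuum `Y` is connected to
`Y` by an ε-chain of continua between `K` and `Y`. -/
theorem hyp_growth (K Y : Hyp X) (hKY : (K.1 : Set X) ⊆ (Y.1 : Set X)) {ε : ℝ} (hε : 0 < ε) :
    ChainIn {L : Hyp X | (K.1 : Set X) ⊆ (L.1 : Set X) ∧ (L.1 : Set X) ⊆ (Y.1 : Set X)} ε K Y := by
  classical
  obtain ⟨Φ, hΦ⟩ := exists_card_bound Y.1.isCompact hε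
  have step : ∀ K' : Hyp X, (K'.1 : Set X) ⊆ (Y.1 : Set X) →
      ∃ C : Set X, IsCompact C ∧ IsPreconnected C ∧ (K'.1 : Set X) ⊆ C ∧ C ⊆ (Y.1 : Set X) ∧
        (∀ y ∈ C, infDist y (K'.1 : Set X) ≤ ε) ∧
        (C = (Y.1 : Set X) ∨ ∃ y ∈ C, ε ≤ infDist y (K'.1 : Set X)) :=
    fun K' h => growth_step Y.1.isCompact Y.2.2 K'.1.isCompact K'.2.2 K'.1.nonempty h hε
  have hdistle : ∀ (K' : Hyp X) (C : Set X), (K'.1 : Set X) ⊆ C →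
      (∀ y ∈ C, infDist y (K'.1 : Set X) ≤ ε) → hausdorffDist (K'.1 : Set X) C ≤ ε := by
    intro K' C h1 h2
    exact hausdorffDist_le_of_infDist hε.le
      (fun x hx => by rw [infDist_zero_of_mem (h1 hx)]; exact hε.le) h2
  have aux : ∀ d : ℕ, ∀ K' : Hyp X, (K'.1 : Set X) ⊆ (Y.1 : Set X) →
      (∃ T : Finset X, ↑T ⊆ (K'.1 : Set X) ∧
        (∀ x ∈ T, ∀ y ∈ T, x ≠ y → ε ≤ dist x y) ∧ Φ ≤ T.card + d) →
      ChainIn {L : Hyp X | (K'.1 : Set X) ⊆ (L.1 : Set X) ∧ (L.1 : Set X) ⊆ (Y.1 : Set X)}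
        ε K' Y := by
    intro d
    induction d with
    | zero =>
      rintro K' hK'Y ⟨T, hTK, hTsep, hcard⟩
      obtain ⟨C, hC1, hC2, hC3, hC4, hC5, hC6⟩ := step K' hK'Y
      rcases hC6 with hCY | ⟨y, hyC, hydist⟩
      · refine ChainIn.single ⟨subset_rfl, hK'Y⟩ ⟨hK'Y, subset_rfl⟩ ?_
        rw [hypDist_eq]
        exact hCY ▸ hdistle K' C hC3 hC5
      · exfalso
        have hyT : y ∉ (T : Set X) := fun hyT => by
          rw [infDist_zero_of_mem (hTK hyT)] at hydist; linarith
        have hsep' : ∀ a ∈ insert y T, ∀ b ∈ insert y T, a ≠ b → ε ≤ dist a b := by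
          intro a ha b hb hab
          rcases Finset.mem_insert.1 ha with rfl | ha' <;>
            rcases Finset.mem_insert.1 hb with rfl | hb'
          · exact absurd rfl hab
          · exact le_trans hydist (infDist_le_dist_of_mem (hTK hb'))
          · rw [dist_comm]; exact le_trans hydist (infDist_le_dist_of_mem (hTK ha'))
          · exact hTsep a ha' b hb' hab
        have hsub : ↑(insert y T) ⊆ (Y.1 : Set X) := by
          intro a ha
          rcases Finset.mem_insert.1 (by exact_mod_cast ha) with rfl | ha'
          · exact hC4 hyC
          · exact hK'Y (hTK ha')
        have := hΦ (insert y T) hsub hsep'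
        rw [Finset.card_insert_of_notMem (fun h => hyT (by exact_mod_cast h))] at this
        omega
    | succ d ih =>
      rintro K' hK'Y ⟨T, hTK, hTsep, hcard⟩
      obtain ⟨C, hC1, hC2, hC3, hC4, hC5, hC6⟩ := step K' hK'Y
      rcases hC6 with hCY | ⟨y, hyC, hydist⟩
      · refine ChainIn.single ⟨subset_rfl, hK'Y⟩ ⟨hK'Y, subset_rfl⟩ ?_
        rw [hypDist_eq]
        exact hCY ▸ hdistle K' C hC3 hC5
      · have hCne : C.Nonempty := K'.1.nonempty.mono hC3
        set L : Hyp X := mkHyp C hC1 hCne hC2 with hL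
        have hyT : y ∉ (T : Set X) := fun hyT => by
          rw [infDist_zero_of_mem (hTK hyT)] at hydist; linarith
        have hstep : ChainIn {L' : Hyp X | (K'.1 : Set X) ⊆ (L'.1 : Set X) ∧
            (L'.1 : Set X) ⊆ (Y.1 : Set X)} ε K' L := by
          refine ChainIn.single ⟨subset_rfl, hK'Y⟩ ⟨hC3, hC4⟩ ?_
          rw [hypDist_eq]
          exact hdistle K' C hC3 hC5
        have hsep' : ∀ a ∈ insert y T, ∀ b ∈ insert y T, a ≠ b → ε ≤ dist a b := by
          intro a ha b hb hab
          rcases Finset.mem_insert.1 ha with rfl | ha' <;>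
            rcases Finset.mem_insert.1 hb with rfl | hb'
          · exact absurd rfl hab
          · exact le_trans hydist (infDist_le_dist_of_mem (hTK hb'))
          · rw [dist_comm]; exact le_trans hydist (infDist_le_dist_of_mem (hTK ha'))
          · exact hTsep a ha' b hb' hab
        have hrest := ih L hC4 ⟨insert y T, ?_, hsep', ?_⟩
        · exact hstep.trans (hrest.mono (fun L' hL' => ⟨hC3.trans hL'.1, hL'.2⟩))
        · intro a ha
          rcases Finset.mem_insert.1 (by exact_mod_cast ha) with rfl | ha'
          · exact hyC
          · exact hC3 (hTK ha')
        · rw [Finset.card_insert_of_notMem (fun h => hyT (by exact_mod_cast h))]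
          omega
  obtain ⟨x₀, hx₀⟩ := K.1.nonempty
  exact aux Φ K hKY ⟨{x₀}, by simpa using hx₀, by simp, by simp⟩


-- ### Compactness of the hyperspace of subcontinua

theorem isClosed_isConnected_nc :
    IsClosed {A : NonemptyCompacts X | IsConnected (A : Set X)} := by
  rw [← isOpen_compl_iff, Metric.isOpen_iff]
  intro A hA
  have hAne : (A : Set X).Nonempty := A.nonempty
  have hnp : ¬ IsPreconnected (A : Set X) := fun h => hA ⟨hAne, h⟩
  rw [IsPreconnected] at hnp
  push_neg at hnp
  obtain ⟨U, V, hU, hV, hcover, hne1, hne2, hUV⟩ := hnp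
  set E : Set X := (A : Set X) \ V with hE
  set F : Set X := (A : Set X) \ U with hF
  have hEcomp : IsCompact E := A.isCompact.diff hV
  have hFcomp : IsCompact F := A.isCompact.diff hU
  have hsubE : (A : Set X) ∩ U ⊆ E := fun x hx =>
    ⟨hx.1, fun hxV => (eq_empty_iff_forall_notMem.1 hUV x) ⟨hx.1, hx.2, hxV⟩⟩
  have hsubF : (A : Set X) ∩ V ⊆ F := fun x hx =>
    ⟨hx.1, fun hxU => (eq_empty_iff_forall_notMem.1 hUV x) ⟨hx.1, hxU, hx.2⟩⟩
  have hEne : E.Nonempty := hne1.mono hsubE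
  have hFne : F.Nonempty := hne2.mono hsubF
  have hEF : E ∪ F = (A : Set X) := by
    apply subset_antisymm (union_subset diff_subset diff_subset)
    intro x hx
    rcases hcover hx with hxU | hxV
    · exact Or.inl (hsubE ⟨hx, hxU⟩)
    · exact Or.inr (hsubF ⟨hx, hxV⟩)
  have hdisj : E ∩ F = ∅ := by
    rw [eq_empty_iff_forall_notMem]
    rintro x ⟨⟨hxA, hxV⟩, ⟨_, hxU⟩⟩
    rcases hcover hxA with h | h
    exacts [hxU h, hxV h]
  obtain ⟨δ, hδ, hsep⟩ := exists_pos_forall_le_dist hEcomp hFcomp hEne hFne hdisj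
  refine ⟨δ/3, by linarith, fun B hB => ?_⟩
  rw [mem_ball, NonemptyCompacts.dist_eq] at hB
  intro hBconn
  set U' : Set X := Metric.thickening (δ/3) E with hU'
  set V' : Set X := Metric.thickening (δ/3) F with hV'
  have hfinBA : EMetric.hausdorffEdist (B : Set X) (A : Set X) ≠ ⊤ :=
    Metric.hausdorffEdist_ne_top_of_nonempty_of_bounded B.nonempty A.nonempty
      B.isCompact.isBounded A.isCompact.isBounded
  have hBsub : (B : Set X) ⊆ U' ∪ V' := by
    intro y hy
    obtain ⟨x, hxA, hxy⟩ := Metric.exists_dist_lt_of_hausdorffDist_lt hy hB hfinBA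
    rw [← hEF] at hxA
    rcases hxA with h | h
    · exact Or.inl (Metric.mem_thickening_iff.2 ⟨x, h, hxy⟩)
    · exact Or.inr (Metric.mem_thickening_iff.2 ⟨x, h, hxy⟩)
  have hBU' : ((B : Set X) ∩ U').Nonempty := by
    obtain ⟨e, he⟩ := hEne
    have heA : e ∈ (A : Set X) := (hEF ▸ Or.inl he : _)
    obtain ⟨y, hyB, hxy⟩ := Metric.exists_dist_lt_of_hausdorffDist_lt' heA hB hfinBA
    exact ⟨y, hyB, Metric.mem_thickening_iff.2 ⟨e, he, hxy⟩⟩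
  have hBV' : ((B : Set X) ∩ V').Nonempty := by
    obtain ⟨f, hf⟩ := hFne
    have hfA : f ∈ (A : Set X) := (hEF ▸ Or.inr hf : _)
    obtain ⟨y, hyB, hxy⟩ := Metric.exists_dist_lt_of_hausdorffDist_lt' hfA hB hfinBA
    exact ⟨y, hyB, Metric.mem_thickening_iff.2 ⟨f, hf, hxy⟩⟩
  have hdisj' : ((B : Set X) ∩ (U' ∩ V')).Nonempty := by
    exact hBconn.2 U' V' Metric.isOpen_thickening Metric.isOpen_thickening hBsub hBU' hBV'
  obtain ⟨y, _, hyU', hyV'⟩ := hdisj'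
  obtain ⟨e, he, hye⟩ := Metric.mem_thickening_iff.1 hyU'
  obtain ⟨f, hf, hyf⟩ := Metric.mem_thickening_iff.1 hyV'
  have : δ ≤ dist e f := hsep e he f hf
  have : dist e f < δ := by
    calc dist e f ≤ dist e y + dist y f := dist_triangle _ _ _
      _ < δ/3 + δ/3 := by rw [dist_comm e y]; exact add_lt_add hye hyf
      _ < δ := by linarith
  linarith

instance hypCompactSpace [CompactSpace X] : CompactSpace (Hyp X) := by
  have h1 : IsCompact {A : NonemptyCompacts X | IsConnected (A : Set X)} :=
    isClosed_isConnected_nc.isCompact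
  rw [isCompact_iff_compactSpace] at h1
  exact h1

-- ### the functional μ

/-- Supremum of distances to `x` over a set. -/
noncomputable def supd (x : X) (K : Set X) : ℝ := sSup ((fun y => dist y x) '' K)

theorem dist_le_supd {x : X} {K : Set X} (hK : IsCompact K) {y : X} (hy : y ∈ K) :
    dist y x ≤ supd x K :=
  le_csSup ((hK.image (continuous_id.dist continuous_const)).isBounded.bddAbove)
    (mem_image_of_mem _ hy)

theorem supd_le {x : X} {K : Set X} (hK : K.Nonempty) {r : ℝ}
    (h : ∀ y ∈ K, dist y x ≤ r) : supd x K ≤ r :=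
  csSup_le (hK.image _) (by rintro v ⟨y, hy, rfl⟩; exact h y hy)

theorem supd_mono {x : X} {K L : Set X} (hK : K.Nonempty) (hL : IsCompact L) (h : K ⊆ L) :
    supd x K ≤ supd x L :=
  supd_le hK (fun y hy => dist_le_supd hL (h hy))

theorem supd_le_supd_add_hausdorffDist {x : X} {K L : Set X} (hKne : K.Nonempty)
    (hK : IsCompact K) (hLne : L.Nonempty) (hL : IsCompact L)
    (hfin : EMetric.hausdorffEdist K L ≠ ⊤) :
    supd x K ≤ supd x L + hausdorffDist K L := by
  refine le_of_forall_pos_le_add (fun η hη => ?_)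
  refine supd_le hKne (fun y hy => ?_)
  obtain ⟨z, hz, hyz⟩ := Metric.exists_dist_lt_of_hausdorffDist_lt hy
    (lt_add_of_pos_right _ hη) hfin
  calc dist y x ≤ dist y z + dist z x := dist_triangle _ _ _
    _ ≤ (hausdorffDist K L + η) + supd x L := add_le_add hyz.le (dist_le_supd hL hz)
    _ = supd x L + hausdorffDist K L + η := by ring


-- ### continuity of the functionals on `Hyp X`

theorem continuous_hyp_infDist (x : X) :
    Continuous fun K : Hyp X => infDist x (K.1 : Set X) :=
  (lipschitz_infDist_set x).continuous.comp continuous_subtype_val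

theorem infDist_le_hyp (x : X) (K L : Hyp X) :
    infDist x (K.1 : Set X) ≤ infDist x (L.1 : Set X) + dist K L := by
  rw [hypDist_eq, hausdorffDist_comm]
  exact infDist_le_infDist_add_hausdorffDist (hypEdist_ne_top L K)

theorem continuous_hyp_supd (x : X) :
    Continuous fun K : Hyp X => supd x (K.1 : Set X) := by
  refine LipschitzWith.continuous (K := 1) (LipschitzWith.of_dist_le_mul fun K L => ?_)
  rw [NNReal.coe_one, one_mul, Real.dist_eq, abs_sub_le_iff]
  constructor
  · have := supd_le_supd_add_hausdorffDist (x := x) K.1.nonempty K.1.isCompact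
      L.1.nonempty L.1.isCompact (hypEdist_ne_top K L)
    rw [hypDist_eq]
    linarith
  · have := supd_le_supd_add_hausdorffDist (x := x) L.1.nonempty L.1.isCompact
      K.1.nonempty K.1.isCompact (hypEdist_ne_top L K)
    rw [hausdorffDist_comm] at this
    rw [hypDist_eq]
    linarith

theorem dist_singHyp_le (a b : X) : dist (singHyp a) (singHyp b) ≤ dist a b := by
  rw [hypDist_eq]
  refine hausdorffDist_le_of_mem_dist dist_nonneg ?_ ?_
  · rintro x (rfl : x = a)
    exact ⟨b, rfl, le_rfl⟩
  · rintro y (rfl : y = b)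
    exact ⟨a, rfl, by rw [dist_comm]⟩

theorem supd_singleton (x q : X) : supd x ({q} : Set X) = dist q x := by
  rw [supd, image_singleton, csSup_singleton]

-- ### the two basic continua of continua

/-- The whole space as a subcontinuum. -/
noncomputable def univHyp [CompactSpace X] [ConnectedSpace X] : Hyp X :=
  mkHyp univ isCompact_univ univ_nonempty isPreconnected_univ

theorem isConnected_hit [CompactSpace X] [ConnectedSpace X] (x : X) {c : ℝ} (hc : 0 ≤ c) :
    IsConnected {K : Hyp X | infDist x (K.1 : Set X) ≤ c} := by
  have hclosed : IsClosed {K : Hyp X | infDist x (K.1 : Set X) ≤ c} :=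
    isClosed_le (continuous_hyp_infDist x) continuous_const
  have huniv : (univHyp : Hyp X) ∈ {K : Hyp X | infDist x (K.1 : Set X) ≤ c} := by
    show infDist x (univ : Set X) ≤ c
    rw [infDist_zero_of_mem (mem_univ x)]; exact hc
  refine isConnected_of_chainIn hclosed.isCompact huniv (fun K hK ε hε => ?_)
  refine (hyp_growth K univHyp (subset_univ _) hε).mono (fun L hL => ?_)
  exact le_trans (infDist_le_infDist_of_subset hL.1 K.1.nonempty) hK

theorem isConnected_mulevel [CompactSpace X] [ConnectedSpace X] (x p : X) {c : ℝ} (hc : 0 ≤ c) :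
    IsConnected {K : Hyp X | supd x (K.1 : Set X) - infDist x (K.1 : Set X) ≤ c} := by
  set S := {K : Hyp X | supd x (K.1 : Set X) - infDist x (K.1 : Set X) ≤ c} with hS
  have hsing : ∀ q : X, singHyp q ∈ S := by
    intro q
    show supd x ({q} : Set X) - infDist x ({q} : Set X) ≤ c
    rw [supd_singleton, Metric.infDist_singleton, dist_comm]
    simpa using hc
  have hclosed : IsClosed S :=
    isClosed_le ((continuous_hyp_supd x).sub (continuous_hyp_infDist x)) continuous_const
  refine isConnected_of_chainIn hclosed.isCompact (hsing p) (fun K hK ε hε => ?_)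
  obtain ⟨k, hk⟩ := K.1.nonempty
  have hsub : ((singHyp k).1 : Set X) ⊆ (K.1 : Set X) := by
    simpa using hk
  have chain1 : ChainIn S ε K (singHyp k) := by
    refine ((hyp_growth (singHyp k) K hsub hε).symm).mono (fun L hL => ?_)
    show supd x (L.1 : Set X) - infDist x (L.1 : Set X) ≤ c
    have h1 : supd x (L.1 : Set X) ≤ supd x (K.1 : Set X) :=
      supd_mono L.1.nonempty K.1.isCompact hL.2
    have h2 : infDist x (K.1 : Set X) ≤ infDist x (L.1 : Set X) :=
      infDist_le_infDist_of_subset hL.2 L.1.nonempty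
    have := hK
    rw [hS, mem_setOf_eq] at this
    linarith
  have chain2 : ChainIn S ε (singHyp k) (singHyp p) := by
    obtain ⟨n, f, h0, hn, _, hd⟩ := chainIn_univ (α := X) k p hε
    refine ⟨n, fun i => singHyp (f i), by show singHyp (f 0) = singHyp k; rw [h0],
      by show singHyp (f n) = singHyp p; rw [hn], fun i _ => hsing _,
      fun i hi => le_trans (dist_singHyp_le _ _) (hd i hi)⟩
  exact chain1.trans chain2

-- ### quotient lemmas

variable {p : X}

theorem hsMk_continuous : Continuous (hsMk p) := continuous_quotient_mk'

theorem hsMk_eq_iff {A B : Hyp X} :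
    hsMk p A = hsMk p B ↔ (A = B ∨ (A ∈ CpSet p ∧ B ∈ CpSet p)) := by
  constructor
  · intro h; exact Quotient.exact h
  · intro h; exact Quotient.sound h

theorem hsMk_eq_CpPoint_iff {A : Hyp X} : hsMk p A = CpPoint p ↔ A ∈ CpSet p := by
  rw [CpPoint, hsMk_eq_iff]
  constructor
  · rintro (rfl | ⟨hA, _⟩)
    · show p ∈ ({p} : Set X); exact rfl
    · exact hA
  · intro h
    exact Or.inr ⟨h, show p ∈ ({p} : Set X) from rfl⟩

theorem singHyp_mem_CpSet : singHyp p ∈ CpSet p := show p ∈ ({p} : Set X) from rfl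

theorem isClosed_CpSet : IsClosed (CpSet p) := by
  have : CpSet p = {K : Hyp X | infDist p (K.1 : Set X) ≤ 0} := by
    ext K
    constructor
    · intro h
      have h' : p ∈ (K.1 : Set X) := h
      show infDist p (K.1 : Set X) ≤ 0
      exact le_of_eq (infDist_zero_of_mem h')
    · intro h
      by_contra hK
      have := (K.1.isCompact.isClosed.notMem_iff_infDist_pos K.1.nonempty).1 hK
      exact absurd (lt_of_lt_of_le this h) (lt_irrefl 0)
  rw [this]
  exact isClosed_le (continuous_hyp_infDist p) continuous_const

theorem satOpen_image {𝓤 : Set (Hyp X)} (h : IsOpen 𝓤)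
    (hsat : ∀ B : Hyp X, B ∈ CpSet p → ((𝓤 ∩ CpSet p).Nonempty → B ∈ 𝓤)) :
    IsOpen (hsMk p '' 𝓤) := by
  have hpre : hsMk p ⁻¹' (hsMk p '' 𝓤) = 𝓤 := by
    ext B
    constructor
    · rintro ⟨A, hA, hAB⟩
      rcases hsMk_eq_iff.1 hAB with rfl | ⟨hACp, hBCp⟩
      · exact hA
      · exact hsat B hBCp ⟨A, hA, hACp⟩
    · intro hB; exact ⟨B, hB, rfl⟩
  rw [← isQuotientMap_quotient_mk'.isOpen_preimage]
  show IsOpen (hsMk p ⁻¹' (hsMk p '' 𝓤))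
  rw [hpre]; exact h

theorem isClosedMap_hsMk : IsClosedMap (hsMk p) := by
  intro F hF
  rw [← isQuotientMap_quotient_mk'.isClosed_preimage]
  show IsClosed (hsMk p ⁻¹' (hsMk p '' F))
  by_cases hFC : (F ∩ CpSet p).Nonempty
  · have : hsMk p ⁻¹' (hsMk p '' F) = F ∪ CpSet p := by
      ext B
      constructor
      · rintro ⟨A, hA, hAB⟩
        rcases hsMk_eq_iff.1 hAB with rfl | ⟨_, hBCp⟩
        · exact Or.inl hA
        · exact Or.inr hBCp
      · rintro (hB | hB)
        · exact ⟨B, hB, rfl⟩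
        · obtain ⟨A, hAF, hACp⟩ := hFC
          exact ⟨A, hAF, hsMk_eq_iff.2 (Or.inr ⟨hACp, hB⟩)⟩
    rw [this]
    exact hF.union isClosed_CpSet
  · have : hsMk p ⁻¹' (hsMk p '' F) = F := by
      ext B
      constructor
      · rintro ⟨A, hA, hAB⟩
        rcases hsMk_eq_iff.1 hAB with rfl | ⟨hACp, _⟩
        · exact hA
        · exact absurd ⟨A, hA, hACp⟩ hFC
      · intro hB; exact ⟨B, hB, rfl⟩
    rw [this]; exact hF


theorem stmt17 [CompactSpace X] [ConnectedSpace X] [Nontrivial X] (p : X)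
    (hloc : ∀ U ∈ nhds (CpPoint p), ∃ V ∈ nhds (CpPoint p), IsConnected V ∧ V ⊆ U) :
    ∀ a b : HS p, a ≠ CpPoint p → b ≠ CpPoint p → a ≠ b →
      ∃ M : Set (HS p), IsCompact M ∧ IsConnected M ∧ a ∈ interior M ∧ b ∉ M := by
  intro a b ha hb hab
  obtain ⟨A, rfl⟩ := Quotient.exists_rep a
  obtain ⟨B, rfl⟩ := Quotient.exists_rep b
  have ha' : hsMk p A ≠ CpPoint p := ha
  have hb' : hsMk p B ≠ CpPoint p := hb
  have hpA : A ∉ CpSet p := fun h => ha' (hsMk_eq_CpPoint_iff.mpr h)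
  have hpB : B ∉ CpSet p := fun h => hb' (hsMk_eq_CpPoint_iff.mpr h)
  have hAB : A ≠ B := fun h => hab (by rw [h])
  haveI : CompactSpace (HS p) := Quotient.compactSpace
  -- construct the continuum 𝓜 of continua around A avoiding B
  obtain ⟨𝓜, h𝓜comp, h𝓜conn, ⟨ρ, hρ, hball⟩, hB𝓜, K₀, hK₀𝓜, hK₀C⟩ :
      ∃ 𝓜 : Set (Hyp X), IsCompact 𝓜 ∧ IsConnected 𝓜 ∧ (∃ ρ > 0, Metric.ball A ρ ⊆ 𝓜) ∧
        B ∉ 𝓜 ∧ ∃ K₀ ∈ 𝓜, K₀ ∈ CpSet p := by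
    by_cases hx : ∃ x ∈ (A.1 : Set X), x ∉ (B.1 : Set X)
    · -- Case 1 : a point of A outside B; use the "hit" continuum
      obtain ⟨x, hxA, hxB⟩ := hx
      have hδ : 0 < infDist x (B.1 : Set X) :=
        (B.1.isCompact.isClosed.notMem_iff_infDist_pos B.1.nonempty).1 hxB
      refine ⟨{K : Hyp X | infDist x (K.1 : Set X) ≤ infDist x (B.1 : Set X)/2},
        (isClosed_le (continuous_hyp_infDist x) continuous_const).isCompact,
        isConnected_hit x (by linarith), ⟨infDist x (B.1 : Set X)/2, by linarith, ?_⟩, ?_,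
        (univHyp : Hyp X), ?_, ?_⟩
      · intro K hK
        rw [mem_ball] at hK
        have h1 := infDist_le_hyp x K A
        have h2 : infDist x (A.1 : Set X) = 0 := infDist_zero_of_mem hxA
        show infDist x (K.1 : Set X) ≤ infDist x (B.1 : Set X)/2
        linarith
      · show ¬ (infDist x (B.1 : Set X) ≤ infDist x (B.1 : Set X)/2)
        intro h; linarith
      · show infDist x (((univHyp : Hyp X)).1 : Set X) ≤ infDist x (B.1 : Set X)/2
        rw [show (((univHyp : Hyp X)).1 : Set X) = univ from rfl,
          infDist_zero_of_mem (mem_univ x)]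
        linarith
      · show p ∈ ((univHyp : Hyp X).1 : Set X)
        exact mem_univ p
    · -- Case 2 : A ⊆ B; use a sublevel set of the oscillation functional
      push_neg at hx
      have hABsub : (A.1 : Set X) ⊆ (B.1 : Set X) := hx
      obtain ⟨x, hxB, hxA⟩ : ∃ x ∈ (B.1 : Set X), x ∉ (A.1 : Set X) := by
        by_contra h
        push_neg at h
        exact hAB (Subtype.ext (NonemptyCompacts.ext (subset_antisymm hABsub h)))
      have hδ : 0 < infDist x (A.1 : Set X) :=
        (A.1.isCompact.isClosed.notMem_iff_infDist_pos A.1.nonempty).1 hxA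
      have hμA : infDist x (A.1 : Set X) ≤ supd x (A.1 : Set X) := by
        obtain ⟨a₀, ha₀⟩ := A.1.nonempty
        have h1 : infDist x (A.1 : Set X) ≤ dist x a₀ := infDist_le_dist_of_mem ha₀
        have h2 : dist a₀ x ≤ supd x (A.1 : Set X) := dist_le_supd A.1.isCompact ha₀
        rw [dist_comm] at h1
        linarith
      refine ⟨{K : Hyp X | supd x (K.1 : Set X) - infDist x (K.1 : Set X) ≤
          (supd x (A.1 : Set X) - infDist x (A.1 : Set X)) + infDist x (A.1 : Set X)/2},
        (isClosed_le ((continuous_hyp_supd x).sub (continuous_hyp_infDist x))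
          continuous_const).isCompact,
        isConnected_mulevel x p (by linarith), ⟨infDist x (A.1 : Set X)/4, by linarith, ?_⟩,
        ?_, singHyp p, ?_, singHyp_mem_CpSet⟩
      · intro K hK
        rw [mem_ball] at hK
        have h1 := supd_le_supd_add_hausdorffDist (x := x) K.1.nonempty K.1.isCompact
          A.1.nonempty A.1.isCompact (hypEdist_ne_top K A)
        rw [← hypDist_eq] at h1
        have h2 := infDist_le_hyp x A K
        rw [dist_comm] at h2
        show supd x (K.1 : Set X) - infDist x (K.1 : Set X) ≤
          (supd x (A.1 : Set X) - infDist x (A.1 : Set X)) + infDist x (A.1 : Set X)/2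
        linarith
      · show ¬ (supd x (B.1 : Set X) - infDist x (B.1 : Set X) ≤
          (supd x (A.1 : Set X) - infDist x (A.1 : Set X)) + infDist x (A.1 : Set X)/2)
        intro h
        have hsup : supd x (A.1 : Set X) ≤ supd x (B.1 : Set X) :=
          supd_mono A.1.nonempty B.1.isCompact hABsub
        have hiB : infDist x (B.1 : Set X) = 0 := infDist_zero_of_mem hxB
        linarith
      · show supd x ((singHyp p).1 : Set X) - infDist x ((singHyp p).1 : Set X) ≤
          (supd x (A.1 : Set X) - infDist x (A.1 : Set X)) + infDist x (A.1 : Set X)/2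
        rw [show ((singHyp p).1 : Set X) = ({p} : Set X) from rfl, supd_singleton,
          Metric.infDist_singleton, dist_comm]
        linarith
  -- the neighbourhood of the distinguished point avoiding b
  have hrpos : 0 < infDist B (CpSet p) :=
    (isClosed_CpSet.notMem_iff_infDist_pos ⟨singHyp p, singHyp_mem_CpSet⟩).1 hpB
  have hOopen : IsOpen {K : Hyp X | infDist K (CpSet p) < infDist B (CpSet p)/2} :=
    isOpen_lt (continuous_infDist_pt (CpSet p)) continuous_const
  have hCpO : CpSet p ⊆ {K : Hyp X | infDist K (CpSet p) < infDist B (CpSet p)/2} := by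
    intro K hK
    show infDist K (CpSet p) < infDist B (CpSet p)/2
    rw [infDist_zero_of_mem hK]; linarith
  have hWopen : IsOpen (hsMk p '' {K : Hyp X | infDist K (CpSet p) < infDist B (CpSet p)/2}) :=
    satOpen_image hOopen (fun B' hB' _ => hCpO hB')
  have hCpW : CpPoint p ∈
      hsMk p '' {K : Hyp X | infDist K (CpSet p) < infDist B (CpSet p)/2} :=
    ⟨singHyp p, hCpO singHyp_mem_CpSet, rfl⟩
  obtain ⟨V, hVnhds, hVconn, hVW⟩ := hloc _ (hWopen.mem_nhds hCpW)
  have hObarclosed : IsClosed {K : Hyp X | infDist K (CpSet p) ≤ infDist B (CpSet p)/2} :=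
    isClosed_le (continuous_infDist_pt _) continuous_const
  have hclV : closure V ⊆
      hsMk p '' {K : Hyp X | infDist K (CpSet p) ≤ infDist B (CpSet p)/2} :=
    closure_minimal (hVW.trans (image_mono
      (fun K hK => show infDist K (CpSet p) ≤ infDist B (CpSet p)/2 from le_of_lt hK)))
      (isClosedMap_hsMk _ hObarclosed)
  have hbObar : hsMk p B ∉
      hsMk p '' {K : Hyp X | infDist K (CpSet p) ≤ infDist B (CpSet p)/2} := by
    rintro ⟨K, hK, hKB⟩
    rcases hsMk_eq_iff.1 hKB with rfl | ⟨_, hBCp⟩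
    · have h' : infDist K (CpSet p) ≤ infDist K (CpSet p)/2 := hK
      linarith
    · exact hpB hBCp
  have hbV : hsMk p B ∉ closure V := fun h => hbObar (hclV h)
  have hb𝓜 : hsMk p B ∉ hsMk p '' 𝓜 := by
    rintro ⟨K, hK, hKB⟩
    rcases hsMk_eq_iff.1 hKB with rfl | ⟨_, hBCp⟩
    · exact hB𝓜 hK
    · exact hpB hBCp
  obtain ⟨W₂, hW₂V, hW₂open, hpW₂⟩ := mem_nhds_iff.1 hVnhds
  have h𝓤open : IsOpen (Metric.ball A ρ ∪ hsMk p ⁻¹' W₂) :=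
    Metric.isOpen_ball.union (hW₂open.preimage hsMk_continuous)
  have hCp𝓤 : ∀ B' ∈ CpSet p, B' ∈ Metric.ball A ρ ∪ hsMk p ⁻¹' W₂ := by
    intro B' hB'
    right
    show hsMk p B' ∈ W₂
    rw [hsMk_eq_CpPoint_iff.mpr hB']
    exact hpW₂
  have himgopen : IsOpen (hsMk p '' (Metric.ball A ρ ∪ hsMk p ⁻¹' W₂)) :=
    satOpen_image h𝓤open (fun B' hB' _ => hCp𝓤 B' hB')
  refine ⟨hsMk p '' 𝓜 ∪ closure V, ?_, ?_, ?_, ?_⟩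
  · exact (h𝓜comp.image hsMk_continuous).union isClosed_closure.isCompact
  · exact IsConnected.union
      ⟨CpPoint p, ⟨⟨K₀, hK₀𝓜, hsMk_eq_CpPoint_iff.mpr hK₀C⟩,
        subset_closure (mem_of_mem_nhds hVnhds)⟩⟩
      (h𝓜conn.image _ hsMk_continuous.continuousOn) hVconn.closure
  · rw [mem_interior]
    refine ⟨hsMk p '' (Metric.ball A ρ ∪ hsMk p ⁻¹' W₂), ?_, himgopen,
      ⟨A, Or.inl (mem_ball_self hρ), rfl⟩⟩
    rintro q ⟨K, hK, rfl⟩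
    rcases hK with hK | hK
    · exact Or.inl ⟨K, hball hK, rfl⟩
    · exact Or.inr (subset_closure (hW₂V hK))
  · rintro (h | h)
    exacts [hb𝓜 h, hbV h]
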